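/- Let B be a real symmetric N×N matrix with eigenvalues λ_1,…,λ_N, let δ ∈ (0,1) and μ* > 0 be constants, let (μ_n)_{n≥0} and (γ_n)_{n≥0} be real sequences with 0 < μ_n ≤ μ* and δ ≤ μ_n·γ_n·λ_i < 1 for all n and all i = 1,…,N, and let 𝓛 > 0. Let (ε_n)_{n≥0} be a sequence in ℝ^N satisfying ε_{n+1} = (I − μ_n·γ_n·B)·ε_n + μ_n·d_n, where (d_n) is a sequence in ℝ^N with ‖d_n‖ ≤ 𝓛·‖ε_n‖ for all n. Then ‖ε_n‖ ≤ (1 − δ + μ*·𝓛)^n·‖ε_0‖ for all n; in particular, if 1 − δ + μ*·𝓛 < 1 then ‖ε_n‖ → 0 as n → ∞. -/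

import Mathlib

open Matrix in
lemma key {N : ℕ} (B : Matrix (Fin N) (Fin N) ℝ) (hB : B.IsHermitian)
    (s c : ℝ) (hc : 0 ≤ c)
    (hev : ∀ i, 1 - c ≤ s * hB.eigenvalues i ∧ s * hB.eigenvalues i < 1)
    (v : EuclideanSpace ℝ (Fin N)) :
    ‖Matrix.toEuclideanCLM (𝕜 := ℝ) (n := Fin N) (1 - s • B) v‖ ≤ c * ‖v‖ := by
  set b := hB.eigenvectorBasis
  set T := Matrix.toEuclideanCLM (𝕜 := ℝ) (n := Fin N) (1 - s • B)
  have hTb : ∀ j, T (b j) = (1 - s * hB.eigenvalues j) • b j := by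
    intro j
    apply (WithLp.equiv 2 _).injective
    rw [WithLp.equiv_apply, WithLp.equiv_apply, Matrix.ofLp_toEuclideanCLM]
    ext i
    have := congrFun (hB.mulVec_eigenvectorBasis j) i
    simp [Matrix.sub_mulVec, Matrix.smul_mulVec, this, sub_smul]
    simp only [Pi.smul_apply, smul_eq_mul] at this
    rw [mul_assoc, ← this]
  have hrepr : ∀ i, b.repr (T v) i = (1 - s * hB.eigenvalues i) * b.repr v i := by
    intro i
    conv_lhs => rw [← b.sum_repr v]
    rw [map_sum]
    simp only [_root_.map_smul, hTb, smul_smul]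
    rw [b.repr_apply_apply, b.orthonormal.inner_right_fintype]
    ring
  have h1 : ‖T v‖ = ‖b.repr (T v)‖ := (b.repr.norm_map _).symm
  have h2 : ‖v‖ = ‖b.repr v‖ := (b.repr.norm_map _).symm
  rw [h1, h2, EuclideanSpace.norm_eq, EuclideanSpace.norm_eq, ← Real.sqrt_sq hc,
    ← Real.sqrt_mul (by positivity)]
  apply Real.sqrt_le_sqrt
  rw [Finset.mul_sum]
  apply Finset.sum_le_sum
  intro i _
  rw [hrepr i]
  have h3 : |1 - s * hB.eigenvalues i| ≤ c := by
    rw [abs_le]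
    constructor <;> nlinarith [(hev i).1, (hev i).2]
  calc ‖(1 - s * hB.eigenvalues i) * b.repr v i‖ ^ 2
      = (1 - s * hB.eigenvalues i)^2 * ‖b.repr v i‖^2 := by
        rw [norm_mul]; rw [mul_pow]; rw [Real.norm_eq_abs, sq_abs]
    _ ≤ c^2 * ‖b.repr v i‖^2 := by
        apply mul_le_mul_of_nonneg_right _ (by positivity)
        rw [← sq_abs]; exact pow_le_pow_left₀ (abs_nonneg _) h3 2

theorem stmt8 {N : ℕ} (hN : 0 < N) (B : Matrix (Fin N) (Fin N) ℝ)
    (hB : B.IsHermitian)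
    (δ : ℝ) (hδ0 : 0 < δ) (hδ1 : δ < 1)
    (μstar : ℝ) (hμstar : 0 < μstar)
    (μ γ : ℕ → ℝ)
    (hμ : ∀ n, 0 < μ n ∧ μ n ≤ μstar)
    (hμγ : ∀ n i, δ ≤ μ n * γ n * hB.eigenvalues i ∧ μ n * γ n * hB.eigenvalues i < 1)
    (L : ℝ) (hL : 0 < L)
    (ε d : ℕ → EuclideanSpace ℝ (Fin N))
    (hd : ∀ n, ‖d n‖ ≤ L * ‖ε n‖)
    (hrec : ∀ n, ε (n + 1) =
      Matrix.toEuclideanCLM (𝕜 := ℝ) (n := Fin N) (1 - (μ n * γ n) • B) (ε n)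
        + μ n • d n) :
    (∀ n, ‖ε n‖ ≤ (1 - δ + μstar * L) ^ n * ‖ε 0‖) ∧
    (1 - δ + μstar * L < 1 →
      Filter.Tendsto (fun n => ‖ε n‖) Filter.atTop (nhds 0)) := by
  set r : ℝ := 1 - δ + μstar * L with hr
  have hr0 : 0 ≤ r := by nlinarith
  have hstep : ∀ n, ‖ε (n + 1)‖ ≤ r * ‖ε n‖ := by
    intro n
    have hk := key B hB (μ n * γ n) (1 - δ) (by linarith)
      (fun i => by simpa using hμγ n i) (ε n)
    have h1 : ‖ε (n + 1)‖ ≤ (1 - δ) * ‖ε n‖ + μ n * ‖d n‖ := by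
      rw [hrec n]
      refine (norm_add_le _ _).trans ?_
      gcongr
      rw [norm_smul, Real.norm_eq_abs, abs_of_pos (hμ n).1]
    have h2 : μ n * ‖d n‖ ≤ μstar * (L * ‖ε n‖) := by
      have := hd n
      have := (hμ n).1
      have := (hμ n).2
      nlinarith [norm_nonneg (d n), norm_nonneg (ε n)]
    calc ‖ε (n+1)‖ ≤ (1 - δ) * ‖ε n‖ + μstar * (L * ‖ε n‖) := by linarith
      _ = r * ‖ε n‖ := by ring
  have hmain : ∀ n, ‖ε n‖ ≤ r ^ n * ‖ε 0‖ := by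
    intro n
    induction n with
    | zero => simp
    | succ k ih =>
      calc ‖ε (k+1)‖ ≤ r * ‖ε k‖ := hstep k
        _ ≤ r * (r ^ k * ‖ε 0‖) := by gcongr
        _ = r ^ (k+1) * ‖ε 0‖ := by ring
  refine ⟨hmain, fun hr1 => ?_⟩
  have hpow : Filter.Tendsto (fun n => r ^ n * ‖ε 0‖) Filter.atTop (nhds 0) := by
    simpa using (tendsto_pow_atTop_nhds_zero_of_lt_one hr0 hr1).mul_const ‖ε 0‖
  exact squeeze_zero (fun n => norm_nonneg _) hmain hpow
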